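/- Every d-maximum family C ⊆ 2^X admits a d-dimensional (labeled) compression scheme: there is a compression function κ assigning to each finite restriction f ∈ C|_fin a subset κ(f) ⊆ dom(f) with |κ(f)| ≤ d, and a finite set R of reconstruction functions ρ : [X]^{≤d} × 2^{≤d} → 2^X, such that every f ∈ C|_fin is recovered: f ⊆ ρ(κ(f), f|_{κ(f)}) for some ρ ∈ R. Concretely, one may take κ(f) to be an internally shattered d-subset of dom(f) and the 2^d reconstruction functions indexed by η : d → 2 as in Welzl's lemma. -/

import Mathlib

open Set

variable {X : Type*}

/-- The trace of a set system `C` on a set `A`. -/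
def Tr (C : Set (Set X)) (A : Set X) : Set (Set X) := (fun c => c ∩ A) '' C

/-- `C` shatters the set `A`. -/
def Shat (C : Set (Set X)) (A : Set X) : Prop := ∀ t ⊆ A, ∃ c ∈ C, c ∩ A = t

/-- The VC dimension of `C` is at most `d`. -/
def VCLe (C : Set (Set X)) (d : ℕ) : Prop := ∀ A : Finset X, Shat C ↑A → A.card ≤ d

/-- The VC dimension of `C` is exactly `d`. -/
def VCEq (C : Set (Set X)) (d : ℕ) : Prop :=
  VCLe C d ∧ ∃ A : Finset X, A.card = d ∧ Shat C ↑A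

/-- The Sauer–Shelah bound `Φ_d(n) = Σ_{i=0}^d C(n,i)`. -/
def Phi (d n : ℕ) : ℕ := ∑ i ∈ Finset.range (d + 1), n.choose i

/-- `C` is a `d`-maximum class. -/
def IsMaximum (C : Set (Set X)) (d : ℕ) : Prop :=
  VCEq C d ∧ ∀ A : Finset X, (Tr C ↑A).ncard = Phi d A.card

/-- `C` is a `d`-maximal class. -/
def IsMaximal (C : Set (Set X)) (d : ℕ) : Prop :=
  VCEq C d ∧ ∀ c ∉ C, VCEq (insert c C) (d + 1)

namespace MCS
set_option linter.unusedSectionVars false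

variable [DecidableEq X]

/-! ### Φ lemmas -/

lemma phi_pascal (k m : ℕ) : Phi (k+1) (m+1) = Phi (k+1) m + Phi k m := by
  unfold Phi
  rw [Finset.sum_range_succ' (fun i => (m+1).choose i) (k+1),
      Finset.sum_range_succ' (fun i => m.choose i) (k+1)]
  simp only [Nat.choose_succ_succ, Nat.choose_zero_right, Nat.succ_eq_add_one]
  rw [Finset.sum_add_distrib]
  omega

lemma phi_two_pow {k m : ℕ} (h : m ≤ k) : Phi k m = 2 ^ m := by
  unfold Phi
  rw [← Nat.sum_range_choose m]
  refine (Finset.sum_subset (Finset.range_subset_range.2 (by omega)) ?_).symm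
  intro i _ hi
  have : m + 1 ≤ i := by simpa [Finset.mem_range, Nat.lt_succ_iff] using hi
  exact Nat.choose_eq_zero_of_lt (by omega)

lemma phi_base (k : ℕ) : Phi (k+1) (k+2) = 2 ^ (k+2) - 1 := by
  have h := Nat.sum_range_choose (k+2)
  unfold Phi
  rw [show k+1+1 = k+2 by rfl] at *
  have : ∑ i ∈ Finset.range (k + 3), (k+2).choose i
      = (∑ i ∈ Finset.range (k + 2), (k+2).choose i) + (k+2).choose (k+2) := by
    exact Finset.sum_range_succ _ _
  rw [this] at h
  simp at h ⊢
  omega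

/-! ### Families -/

def VCle (D : Finset (Finset X)) (k : ℕ) : Prop := ∀ S : Finset X, D.Shatters S → S.card ≤ k

def M (D : Finset (Finset X)) (B : Finset X) (k : ℕ) : Prop :=
  (∀ f ∈ D, f ⊆ B) ∧ VCle D k ∧ D.card = Phi k B.card

def res (D : Finset (Finset X)) (y : X) : Finset (Finset X) := D.image (fun f => f.erase y)

def red (D : Finset (Finset X)) (y : X) : Finset (Finset X) :=
  D.filter (fun f => y ∉ f ∧ insert y f ∈ D)

lemma mem_red {D : Finset (Finset X)} {y : X} {g : Finset X} :
    g ∈ red D y ↔ g ∈ D ∧ y ∉ g ∧ insert y g ∈ D := by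
  simp [red]

lemma mem_res {D : Finset (Finset X)} {y : X} {g : Finset X} :
    g ∈ res D y ↔ ∃ f ∈ D, f.erase y = g := by
  simp [res]

/-! ### Sauer–Shelah -/

lemma phi_eq_card (B : Finset X) (k : ℕ) :
    Phi k B.card = (B.powerset.filter (fun S => S.card ≤ k)).card := by
  have hset : B.powerset.filter (fun S => S.card ≤ k)
      = (Finset.range (k+1)).biUnion (fun i => B.powersetCard i) := by
    ext S
    simp only [Finset.mem_filter, Finset.mem_powerset, Finset.mem_biUnion, Finset.mem_range,
      Finset.mem_powersetCard, Nat.lt_succ_iff]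
    constructor
    · rintro ⟨h1, h2⟩; exact ⟨S.card, h2, h1, rfl⟩
    · rintro ⟨i, hi, h1, rfl⟩; exact ⟨h1, hi⟩
  rw [hset, Finset.card_biUnion]
  · unfold Phi
    exact Finset.sum_congr rfl fun i _ => (Finset.card_powersetCard i B).symm
  · intro i _ j _ hij
    simp only [Finset.disjoint_left, Finset.mem_powersetCard]
    rintro S ⟨_, rfl⟩ ⟨_, h⟩
    exact hij h

lemma sauer {D : Finset (Finset X)} {B : Finset X} {k : ℕ}
    (hsub : ∀ f ∈ D, f ⊆ B) (hvc : VCle D k) : D.card ≤ Phi k B.card := by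
  rw [phi_eq_card]
  refine (Finset.card_le_card_shatterer D).trans (Finset.card_le_card ?_)
  intro S hS
  rw [Finset.mem_shatterer] at hS
  obtain ⟨u, hu, hSu⟩ := hS.exists_superset
  exact Finset.mem_filter.2 ⟨Finset.mem_powerset.2 (hSu.trans (hsub u hu)), hvc S hS⟩

/-! ### counting -/

lemma card_res_add_card_red (D : Finset (Finset X)) (y : X) :
    (res D y).card + (red D y).card = D.card := by
  classical
  set D0 := D.filter (fun f => y ∉ f) with hD0
  set D1 := D.filter (fun f => y ∈ f) with hD1
  set E1 := D1.image (fun f => f.erase y) with hE1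
  have hE1card : E1.card = D1.card := by
    apply Finset.card_image_of_injOn
    intro f hf g hg hfg
    simp only [hD1, Finset.mem_coe, Finset.mem_filter] at hf hg
    have hfg' : f.erase y = g.erase y := hfg
    rw [← Finset.insert_erase hf.2, hfg', Finset.insert_erase hg.2]
  have hres : res D y = D0 ∪ E1 := by
    ext g
    simp only [mem_res, Finset.mem_union, hD0, hE1, hD1, Finset.mem_filter, Finset.mem_image]
    constructor
    · rintro ⟨f, hf, rfl⟩
      by_cases hy : y ∈ f
      · exact Or.inr ⟨f, ⟨hf, hy⟩, rfl⟩
      · exact Or.inl ⟨by rwa [Finset.erase_eq_of_notMem hy], Finset.notMem_erase _ _⟩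
    · rintro (⟨hg, hgy⟩ | ⟨f, ⟨hf, hy⟩, rfl⟩)
      · exact ⟨g, hg, Finset.erase_eq_of_notMem hgy⟩
      · exact ⟨f, hf, rfl⟩
  have hred : red D y = D0 ∩ E1 := by
    ext g
    simp only [mem_red, Finset.mem_inter, hD0, hE1, hD1, Finset.mem_filter, Finset.mem_image]
    constructor
    · rintro ⟨hg, hgy, hins⟩
      exact ⟨⟨hg, hgy⟩, insert y g, ⟨hins, Finset.mem_insert_self _ _⟩,
        by rw [Finset.erase_insert hgy]⟩
    · rintro ⟨⟨hg, hgy⟩, f, ⟨hf, hy⟩, rfl⟩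
      exact ⟨hg, hgy, by rw [Finset.insert_erase hy]; exact hf⟩
  have hcard : D0.card + D1.card = D.card := by
    rw [hD0, hD1]
    have h := Finset.card_filter_add_card_filter_not (s := D) (p := fun f => y ∉ f)
    simpa [not_not] using h
  rw [hres, hred, ← hcard, ← hE1card]
  have := Finset.card_union_add_card_inter D0 E1
  omega

/-! ### VC of res/red -/

lemma shatters_no_y {D : Finset (Finset X)} {y : X} {S : Finset X}
    (hnot : ∀ f ∈ D, y ∉ f) (hS : D.Shatters S) : y ∉ S := by
  intro hy
  obtain ⟨u, hu, hSu⟩ := hS (Finset.Subset.refl S)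
  have : S ⊆ u := Finset.inter_eq_left.1 hSu
  exact hnot u hu (this hy)

lemma vcle_res {D : Finset (Finset X)} {k : ℕ} (h : VCle D k) (y : X) : VCle (res D y) k := by
  intro S hS
  have hyS : y ∉ S := shatters_no_y (fun f hf => by
    obtain ⟨g, _, rfl⟩ := mem_res.1 hf; exact Finset.notMem_erase _ _) hS
  apply h S
  intro t ht
  obtain ⟨u, hu, hSu⟩ := hS ht
  obtain ⟨f, hf, rfl⟩ := mem_res.1 hu
  refine ⟨f, hf, ?_⟩
  rw [← hSu]
  ext a
  simp only [Finset.mem_inter, Finset.mem_erase]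
  exact ⟨fun ⟨h1, h2⟩ => ⟨h1, fun he => hyS (he ▸ h1), h2⟩, fun ⟨h1, _, h3⟩ => ⟨h1, h3⟩⟩

lemma vcle_red {D : Finset (Finset X)} {k : ℕ} (h : VCle D (k+1)) (y : X) : VCle (red D y) k := by
  intro S hS
  have hyS : y ∉ S := shatters_no_y (fun f hf => (mem_red.1 hf).2.1) hS
  have hins : D.Shatters (insert y S) := by
    intro t ht
    by_cases hyt : y ∈ t
    · obtain ⟨g, hg, hSg⟩ := hS (show t.erase y ⊆ S by
        intro a ha
        have := ht (Finset.mem_of_mem_erase ha)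
        rcases Finset.mem_insert.1 this with h | h
        · exact absurd h (Finset.ne_of_mem_erase ha)
        · exact h)
      obtain ⟨hgD, hgy, hgins⟩ := mem_red.1 hg
      refine ⟨insert y g, hgins, ?_⟩
      have : insert y S ∩ insert y g = insert y (S ∩ g) := by
        ext a
        simp only [Finset.mem_inter, Finset.mem_insert]
        tauto
      rw [this, hSg, Finset.insert_erase hyt]
    · obtain ⟨g, hg, hSg⟩ := hS (fun a ha => by
        have := ht ha
        rcases Finset.mem_insert.1 this with h | h
        · exact absurd (h ▸ ha) hyt
        · exact h)
      obtain ⟨hgD, hgy, _⟩ := mem_red.1 hg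
      refine ⟨g, hgD, ?_⟩
      rw [← hSg]
      ext a
      simp only [Finset.mem_inter, Finset.mem_insert]
      constructor
      · rintro ⟨h1 | h1, h2⟩
        · exact absurd (h1 ▸ h2) hgy
        · exact ⟨h1, h2⟩
      · rintro ⟨h1, h2⟩; exact ⟨Or.inr h1, h2⟩
  have := h _ hins
  rw [Finset.card_insert_of_notMem hyS] at this
  omega

/-! ### M of res/red -/

lemma M_res {D : Finset (Finset X)} {B : Finset X} {k : ℕ} (h : M D B k) {y : X} (hy : y ∈ B) :
    M (res D y) (B.erase y) k := by
  obtain ⟨hsub, hvc, hcard⟩ := h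
  have hressub : ∀ f ∈ res D y, f ⊆ B.erase y := by
    intro f hf
    obtain ⟨g, hg, rfl⟩ := mem_res.1 hf
    exact Finset.erase_subset_erase y (hsub g hg)
  have hcB : (B.erase y).card + 1 = B.card := Finset.card_erase_add_one hy
  match k with
  | 0 =>
    refine ⟨hressub, vcle_res hvc y, ?_⟩
    have h1 : (res D y).card ≤ 1 := by
      have : D.card = 1 := by simpa [Phi] using hcard
      calc (res D y).card ≤ D.card := Finset.card_image_le
        _ = 1 := this
    have h2 : 0 < (res D y).card := by
      have : D.Nonempty := Finset.card_pos.1 (by simp [hcard, Phi])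
      obtain ⟨f, hf⟩ := this
      exact Finset.card_pos.2 ⟨f.erase y, mem_res.2 ⟨f, hf, rfl⟩⟩
    simp [Phi]
    omega
  | k+1 =>
    have hresle : (res D y).card ≤ Phi (k+1) (B.erase y).card :=
      sauer hressub (vcle_res hvc y)
    have hredsub : ∀ f ∈ red D y, f ⊆ B.erase y := by
      intro f hf
      obtain ⟨hfD, hfy, _⟩ := mem_red.1 hf
      exact Finset.subset_erase.2 ⟨hsub f hfD, hfy⟩
    have hredle : (red D y).card ≤ Phi k (B.erase y).card :=
      sauer hredsub (vcle_red hvc y)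
    have hsum := card_res_add_card_red D y
    have hpas : Phi (k+1) B.card = Phi (k+1) (B.erase y).card + Phi k (B.erase y).card := by
      rw [← hcB]; exact phi_pascal k _
    exact ⟨hressub, vcle_res hvc y, by omega⟩

lemma M_red {D : Finset (Finset X)} {B : Finset X} {k : ℕ} (h : M D B (k+1)) {y : X} (hy : y ∈ B) :
    M (red D y) (B.erase y) k := by
  obtain ⟨hsub, hvc, hcard⟩ := h
  have hcB : (B.erase y).card + 1 = B.card := Finset.card_erase_add_one hy
  have hressub : ∀ f ∈ res D y, f ⊆ B.erase y := by
    intro f hf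
    obtain ⟨g, hg, rfl⟩ := mem_res.1 hf
    exact Finset.erase_subset_erase y (hsub g hg)
  have hresle : (res D y).card ≤ Phi (k+1) (B.erase y).card := sauer hressub (vcle_res hvc y)
  have hredsub : ∀ f ∈ red D y, f ⊆ B.erase y := by
    intro f hf
    obtain ⟨hfD, hfy, _⟩ := mem_red.1 hf
    exact Finset.subset_erase.2 ⟨hsub f hfD, hfy⟩
  have hredle : (red D y).card ≤ Phi k (B.erase y).card := sauer hredsub (vcle_red hvc y)
  have hsum := card_res_add_card_red D y
  have hpas : Phi (k+1) B.card = Phi (k+1) (B.erase y).card + Phi k (B.erase y).card := by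
    rw [← hcB]; exact phi_pascal k _
  exact ⟨hredsub, vcle_red hvc y, by omega⟩

/-! ### flip -/

def flip (f : Finset X) (x : X) : Finset X := if x ∈ f then f.erase x else insert x f

lemma mem_flip {f : Finset X} {x a : X} :
    a ∈ flip f x ↔ (if a = x then x ∉ f else a ∈ f) := by
  by_cases hax : a = x
  · subst hax; by_cases hx : a ∈ f <;> simp [flip, hx]
  · by_cases hx : x ∈ f <;> simp [flip, hx, hax]

lemma flip_mem_cases {f : Finset X} {x : X} :
    (x ∈ f ∧ flip f x = f.erase x) ∨ (x ∉ f ∧ flip f x = insert x f) := by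
  unfold flip; by_cases hx : x ∈ f <;> simp [hx]

lemma flip_ne {f : Finset X} {x : X} : flip f x ≠ f := by
  intro h
  have hthis := mem_flip (f := f) (x := x) (a := x)
  rw [h] at hthis
  by_cases hx : x ∈ f <;> simp [hx] at hthis

lemma flip_flip {f : Finset X} {x : X} : flip (flip f x) x = f := by
  unfold flip
  by_cases hx : x ∈ f
  · simp [hx, Finset.notMem_erase, Finset.insert_erase hx]
  · simp [hx, Finset.erase_insert hx]

lemma flip_subset {f B : Finset X} {x : X} (hf : f ⊆ B) (hx : x ∈ B) : flip f x ⊆ B := by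
  unfold flip
  by_cases h : x ∈ f
  · simp only [h, if_true]; exact (Finset.erase_subset _ _).trans hf
  · simp only [h, if_false]; exact Finset.insert_subset hx hf

lemma erase_flip {f : Finset X} {x y : X} (hxy : x ≠ y) :
    (flip f y).erase x = flip (f.erase x) y := by
  unfold flip
  by_cases hy : y ∈ f
  · simp only [hy, if_true]
    rw [if_pos (Finset.mem_erase.2 ⟨fun h => hxy h.symm, hy⟩)]
    ext a; simp only [Finset.mem_erase]; tauto
  · simp only [hy, if_false]
    rw [if_neg (fun h => hy (Finset.mem_of_mem_erase h))]
    ext a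
    simp only [Finset.mem_erase, Finset.mem_insert]
    constructor
    · rintro ⟨hax, rfl | h⟩
      · exact Or.inl rfl
      · exact Or.inr ⟨hax, h⟩
    · rintro (rfl | ⟨hax, h⟩)
      · exact ⟨fun h => hxy h.symm, Or.inl rfl⟩
      · exact ⟨hax, Or.inr h⟩

lemma eq_flip_of_erase_eq {c e : Finset X} {x : X} (h : c.erase x = e.erase x) (hne : c ≠ e) :
    c = flip e x := by
  have hx : (x ∈ c) ↔ ¬ (x ∈ e) := by
    by_contra hcon
    apply hne
    ext a
    by_cases hax : a = x
    · subst hax; tauto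
    · constructor
      · intro ha
        have : a ∈ c.erase x := Finset.mem_erase.2 ⟨hax, ha⟩
        rw [h] at this; exact Finset.mem_of_mem_erase this
      · intro ha
        have : a ∈ e.erase x := Finset.mem_erase.2 ⟨hax, ha⟩
        rw [← h] at this; exact Finset.mem_of_mem_erase this
  ext a
  rw [mem_flip]
  by_cases hax : a = x
  · subst hax; simp only [if_pos rfl]; tauto
  · simp only [if_neg hax]
    constructor
    · intro ha
      have : a ∈ c.erase x := Finset.mem_erase.2 ⟨hax, ha⟩
      rw [h] at this; exact Finset.mem_of_mem_erase this
    · intro ha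
      have : a ∈ e.erase x := Finset.mem_erase.2 ⟨hax, ha⟩
      rw [← h] at this; exact Finset.mem_of_mem_erase this

/-! ### the swap lemma -/

lemma erase_comm' (B : Finset X) (x y : X) : (B.erase x).erase y = (B.erase y).erase x := by
  ext a; simp only [Finset.mem_erase]; tauto

lemma resred_subset (D : Finset (Finset X)) {x y : X} (hxy : x ≠ y) :
    res (red D x) y ⊆ red (res D y) x := by
  intro g hg
  obtain ⟨f, hf, rfl⟩ := mem_res.1 hg
  obtain ⟨hfD, hfx, hfins⟩ := mem_red.1 hf
  refine mem_red.2 ⟨mem_res.2 ⟨f, hfD, rfl⟩, fun h => hfx (Finset.mem_of_mem_erase h), ?_⟩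
  refine mem_res.2 ⟨insert x f, hfins, ?_⟩
  rw [Finset.erase_insert_of_ne (fun h => hxy h)]

lemma resred_eq {D : Finset (Finset X)} {B : Finset X} {k : ℕ} (h : M D B (k+1))
    {x y : X} (hx : x ∈ B) (hy : y ∈ B) (hxy : x ≠ y) :
    res (red D x) y = red (res D y) x := by
  have h1 : M (res (red D x) y) ((B.erase x).erase y) k :=
    M_res (M_red h hx) (Finset.mem_erase.2 ⟨fun hc => hxy hc.symm, hy⟩)
  have h2 : M (red (res D y) x) ((B.erase y).erase x) k :=
    M_red (M_res h hy) (Finset.mem_erase.2 ⟨hxy, hx⟩)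
  apply Finset.eq_of_subset_of_card_le (resred_subset D hxy)
  rw [h1.2.2, h2.2.2, erase_comm' B x y]

/-! ### no diagonal square -/

lemma no_diag {D : Finset (Finset X)} {B : Finset X} {k : ℕ} (h : M D B (k+1))
    {x y : X} (hx : x ∈ B) (hy : y ∈ B) (hxy : x ≠ y) {f : Finset X} (hf : f ∈ D)
    (hdiag : flip (flip f x) y ∈ D) : flip f x ∈ D ∨ flip f y ∈ D := by
  set h0 := (f.erase x).erase y with hh0
  -- erase y f and erase y (flip (flip f x) y) are h0 and insert x h0 in some order
  have key1 : f.erase y = h0 ∨ f.erase y = insert x h0 := by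
    by_cases hxf : x ∈ f
    · right
      rw [hh0, erase_comm']
      rw [Finset.insert_erase (Finset.mem_erase.2 ⟨hxy, hxf⟩)]
    · left
      rw [hh0, Finset.erase_eq_of_notMem hxf]
  have key2 : (flip (flip f x) y).erase y = (flip f x).erase y := by
    rcases flip_mem_cases (f := flip f x) (x := y) with ⟨hmem, heq⟩ | ⟨hmem, heq⟩
    · rw [heq]
      ext a; simp only [Finset.mem_erase]; tauto
    · rw [heq, Finset.erase_insert hmem]
      rw [Finset.erase_eq_of_notMem hmem]
  have key3 : (flip f x).erase y = h0 ∨ (flip f x).erase y = insert x h0 := by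
    rcases flip_mem_cases (f := f) (x := x) with ⟨hmem, heq⟩ | ⟨hmem, heq⟩
    · left; rw [heq, hh0]
    · right
      rw [heq, hh0, Finset.erase_insert_of_ne (fun hc => hxy hc), Finset.erase_eq_of_notMem hmem]
  -- h0 and insert x h0 are both in res D y
  have hfres : f.erase y ∈ res D y := mem_res.2 ⟨f, hf, rfl⟩
  have hgres : (flip f x).erase y ∈ res D y := by
    rw [← key2]; exact mem_res.2 ⟨_, hdiag, rfl⟩
  have hx0 : x ∉ h0 := by
    rw [hh0]
    intro hc
    exact Finset.notMem_erase x f (Finset.mem_of_mem_erase hc)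
  have hne : f.erase y ≠ (flip f x).erase y := by
    intro hc
    rcases flip_mem_cases (f := f) (x := x) with ⟨hmem, heq⟩ | ⟨hmem, heq⟩
    · have hxm : x ∈ f.erase y := Finset.mem_erase.2 ⟨fun hcc => hxy hcc, hmem⟩
      rw [hc, heq] at hxm
      exact Finset.notMem_erase x f (Finset.mem_of_mem_erase hxm)
    · have hxm : x ∈ (insert x f).erase y :=
        Finset.mem_erase.2 ⟨fun hcc => hxy hcc, Finset.mem_insert_self _ _⟩
      rw [heq] at hc
      rw [← hc] at hxm
      exact hmem (Finset.mem_of_mem_erase hxm)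
  have hboth : h0 ∈ res D y ∧ insert x h0 ∈ res D y := by
    rcases key1 with k1 | k1 <;> rcases key3 with k3 | k3
    · exact absurd (k1.trans k3.symm) hne
    · exact ⟨k1 ▸ hfres, k3 ▸ hgres⟩
    · exact ⟨k3 ▸ hgres, k1 ▸ hfres⟩
    · exact absurd (k1.trans k3.symm) hne
  have hmemred : h0 ∈ red (res D y) x :=
    mem_red.2 ⟨hboth.1, hx0, hboth.2⟩
  rw [← resred_eq h hx hy hxy] at hmemred
  obtain ⟨g, hgred, hgerase⟩ := mem_res.1 hmemred
  obtain ⟨hgD, hgx, hginsD⟩ := mem_red.1 hgred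
  -- g ∈ {h0, insert y h0}, and {g, insert x g} meets {flip f x, flip f y}
  -- case on y ∈ f and x ∈ f and y ∈ g
  have hgalt : g = h0 ∨ g = insert y h0 := by
    by_cases hyg : y ∈ g
    · right; rw [← hgerase, Finset.insert_erase hyg]
    · left; rw [← hgerase, Finset.erase_eq_of_notMem hyg]
  by_cases hyf : y ∈ f <;> by_cases hxf : x ∈ f
  all_goals rcases hgalt with rfl | rfl
  -- y ∈ f, x ∈ f
  · -- g = h0 : insert x h0 = (f.erase y) with x... insert x g ∈ D: insert x h0 = erase y f... 
    -- x∈f,y∈f: flip f y = f.erase y; insert x h0 = insert x (erase y (erase x f)) = erase y f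
    right
    have : insert x h0 = f.erase y := by
      rw [hh0, erase_comm' f x y, Finset.insert_erase
        (Finset.mem_erase.2 ⟨hxy, hxf⟩)]
    have hfy : flip f y = f.erase y := by
      rcases flip_mem_cases (f := f) (x := y) with ⟨_, heq⟩ | ⟨hm, _⟩
      · exact heq
      · exact absurd hyf hm
    rw [hfy, ← this]
    exact hginsD
  · -- y ∈ f, x ∈ f, g = insert y h0 = erase x f = flip f x
    left
    have : insert y h0 = f.erase x := by
      rw [hh0, Finset.insert_erase (Finset.mem_erase.2 ⟨fun hc => hxy hc.symm, hyf⟩)]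
    have hfx : flip f x = f.erase x := by
      rcases flip_mem_cases (f := f) (x := x) with ⟨_, heq⟩ | ⟨hm, _⟩
      · exact heq
      · exact absurd hxf hm
    rw [hfx, ← this]
    exact hgD
  -- y ∈ f, x ∉ f
  · -- g = h0 = erase y f = flip f y
    right
    have : h0 = f.erase y := by rw [hh0, Finset.erase_eq_of_notMem hxf]
    have hfy : flip f y = f.erase y := by
      rcases flip_mem_cases (f := f) (x := y) with ⟨_, heq⟩ | ⟨hm, _⟩
      · exact heq
      · exact absurd hyf hm
    rw [hfy, ← this]
    exact hgD
  · -- y ∈ f, x ∉ f, g = insert y h0 = f; insert x g = insert x f = flip f x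
    left
    have hg : insert y h0 = f := by
      rw [hh0, Finset.erase_eq_of_notMem hxf, Finset.insert_erase hyf]
    have hfx : flip f x = insert x f := by
      rcases flip_mem_cases (f := f) (x := x) with ⟨hm, _⟩ | ⟨_, heq⟩
      · exact absurd hm hxf
      · exact heq
    rw [hfx, ← hg]
    exact hginsD
  -- y ∉ f, x ∈ f
  · -- g = h0 = erase x f = flip f x
    left
    have : h0 = f.erase x := by rw [hh0, Finset.erase_eq_of_notMem (fun hc => hyf (Finset.mem_of_mem_erase hc))]
    have hfx : flip f x = f.erase x := by
      rcases flip_mem_cases (f := f) (x := x) with ⟨_, heq⟩ | ⟨hm, _⟩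
      · exact heq
      · exact absurd hxf hm
    rw [hfx, ← this]
    exact hgD
  · -- y ∉ f, x ∈ f, g = insert y h0 = insert y (erase x f); insert x g = insert y f = flip f y
    right
    have hfy : flip f y = insert y f := by
      rcases flip_mem_cases (f := f) (x := y) with ⟨hm, _⟩ | ⟨_, heq⟩
      · exact absurd hm hyf
      · exact heq
    have : insert x (insert y h0) = insert y f := by
      rw [hh0, Finset.erase_eq_of_notMem (fun hc => hyf (Finset.mem_of_mem_erase hc))]
      rw [Finset.insert_comm, Finset.insert_erase hxf]
    rw [hfy, ← this]
    exact hginsD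
  -- y ∉ f, x ∉ f
  ·
    left
    have hg : h0 = f := by
      rw [hh0, Finset.erase_eq_of_notMem hxf, Finset.erase_eq_of_notMem hyf]
    have hfx : flip f x = insert x f := by
      rcases flip_mem_cases (f := f) (x := x) with ⟨hm, _⟩ | ⟨_, heq⟩
      · exact absurd hm hxf
      · exact heq
    rw [hfx, ← hg]
    exact hginsD
  · -- y ∉ f, x ∉ f, g = insert y h0 = insert y f = flip f y
    right
    have hg : insert y h0 = insert y f := by
      rw [hh0, Finset.erase_eq_of_notMem hxf, Finset.erase_eq_of_notMem hyf]
    have hfy : flip f y = insert y f := by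
      rcases flip_mem_cases (f := f) (x := y) with ⟨hm, _⟩ | ⟨_, heq⟩
      · exact absurd hm hyf
      · exact heq
    rw [hfy, ← hg]
    exact hgD

/-! ### no isolated vertices -/

lemma ni : ∀ (n : ℕ) {D : Finset (Finset X)} {B : Finset X} {k : ℕ}, B.card = n →
    M D B (k+1) → k + 1 < n → ∀ f ∈ D, ∃ x ∈ B, flip f x ∈ D := by
  intro n
  induction n with
  | zero => intro D B k hB hM hlt; omega
  | succ n ih =>
    intro D B k hB hM hlt f hf
    by_cases hbase : n = k + 1
    · subst hbase
      by_contra hcon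
      push_neg at hcon
      set Fl := B.image (flip f) with hFl
      have hFlcard : Fl.card = k+2 := by
        rw [hFl, Finset.card_image_of_injOn, hB]
        intro a ha b hb hab
        by_contra hne
        have h1 : a ∈ flip f a ↔ a ∉ f := by rw [mem_flip]; simp
        have h2 : a ∈ flip f b ↔ a ∈ f := by rw [mem_flip]; simp [hne]
        simp only [hab] at h1
        tauto
      have hdisj : Disjoint D Fl := by
        rw [Finset.disjoint_right]
        intro g hm hgD
        obtain ⟨x, hx, rfl⟩ := Finset.mem_image.1 hm
        exact hcon x hx hgD
      have hsub : D ∪ Fl ⊆ B.powerset := by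
        intro g hg
        rcases Finset.mem_union.1 hg with hg | hg
        · exact Finset.mem_powerset.2 (hM.1 g hg)
        · obtain ⟨x, hx, rfl⟩ := Finset.mem_image.1 hg
          exact Finset.mem_powerset.2 (flip_subset (hM.1 f hf) hx)
      have hcards := Finset.card_le_card hsub
      rw [Finset.card_union_of_disjoint hdisj, Finset.card_powerset, hB] at hcards
      have hD := hM.2.2
      rw [hB, phi_base] at hD
      have hp : 0 < 2 ^ (k+2) := Nat.pow_pos (by norm_num)
      have h2eq : (2:ℕ)^(k+1+1) = 2^(k+2) := rfl
      rw [h2eq] at hcards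
      omega
    · have hlt' : k + 1 < n := by omega
      have hBne : B.Nonempty := Finset.card_pos.1 (by omega)
      obtain ⟨x, hx⟩ := hBne
      have hM' : M (res D x) (B.erase x) (k+1) := M_res hM hx
      have hcard' : (B.erase x).card = n := by rw [Finset.card_erase_of_mem hx, hB]; omega
      have hf' : f.erase x ∈ res D x := mem_res.2 ⟨f, hf, rfl⟩
      obtain ⟨y, hy, hflip⟩ := ih hcard' hM' hlt' _ hf'
      have hyB : y ∈ B := Finset.mem_of_mem_erase hy
      have hyx : y ≠ x := (Finset.mem_erase.1 hy).1
      have hcomm : flip (f.erase x) y = (flip f y).erase x := (erase_flip (Ne.symm hyx)).symm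
      rw [hcomm] at hflip
      obtain ⟨c, hc, hcerase⟩ := mem_res.1 hflip
      by_cases hceq : c = flip f y
      · exact ⟨y, hyB, hceq ▸ hc⟩
      · have hcf : c = flip (flip f y) x := eq_flip_of_erase_eq hcerase hceq
        rw [hcf] at hc
        rcases no_diag hM hyB hx hyx hf hc with h | h
        · exact ⟨y, hyB, h⟩
        · exact ⟨x, hx, h⟩

/-! ### Welzl's lemma: internally shattered sets exist -/

lemma welzl : ∀ (d : ℕ) {D : Finset (Finset X)} {B : Finset X}, M D B d →
    ∀ f ∈ D, ∃ A, A ⊆ B ∧ A.card = min d B.card ∧ ∀ s ⊆ A, (f \ A) ∪ s ∈ D := by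
  intro d
  induction d with
  | zero =>
    intro D B hM f hf
    refine ⟨∅, Finset.empty_subset _, by simp, ?_⟩
    intro s hs
    rw [Finset.subset_empty.1 hs]
    simpa using hf
  | succ d ih =>
    intro D B hM f hf
    by_cases hsz : B.card ≤ d + 1
    · refine ⟨B, Finset.Subset.refl _, (min_eq_right hsz).symm, ?_⟩
      have hpow : D = B.powerset := by
        apply Finset.eq_of_subset_of_card_le (fun g hg => Finset.mem_powerset.2 (hM.1 g hg))
        rw [Finset.card_powerset, hM.2.2, phi_two_pow hsz]
      intro s hs
      rw [hpow]
      have hfB : f \ B = ∅ := Finset.sdiff_eq_empty_iff_subset.2 (hM.1 f hf)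
      rw [hfB, Finset.empty_union]
      exact Finset.mem_powerset.2 hs
    · push_neg at hsz
      obtain ⟨x, hx, hflip⟩ := ni B.card rfl hM hsz f hf
      have hf0 : f.erase x ∈ red D x := by
        rcases flip_mem_cases (f := f) (x := x) with ⟨hm, heq⟩ | ⟨hm, heq⟩
        · exact mem_red.2 ⟨heq ▸ hflip, Finset.notMem_erase _ _,
            by rw [Finset.insert_erase hm]; exact hf⟩
        · exact mem_red.2 ⟨by rw [Finset.erase_eq_of_notMem hm]; exact hf,
            Finset.notMem_erase _ _,
            by rw [Finset.erase_eq_of_notMem hm, ← heq]; exact hflip⟩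
      have hMred : M (red D x) (B.erase x) d := M_red hM hx
      obtain ⟨A', hA'sub, hA'card, hcube⟩ := ih hMred _ hf0
      have hBx : (B.erase x).card = B.card - 1 := Finset.card_erase_of_mem hx
      have hA'c : A'.card = d := by rw [hA'card, hBx, min_eq_left (by omega)]
      have hxA' : x ∉ A' := fun hc => Finset.notMem_erase x B (hA'sub hc)
      refine ⟨insert x A', Finset.insert_subset hx (hA'sub.trans (Finset.erase_subset _ _)),
        ?_, ?_⟩
      · rw [Finset.card_insert_of_notMem hxA', hA'c, min_eq_left (by omega)]
      · intro s hs
        have hs' : s.erase x ⊆ A' := by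
          intro a ha
          rcases Finset.mem_insert.1 (hs (Finset.mem_of_mem_erase ha)) with h | h
          · exact absurd h (Finset.ne_of_mem_erase ha)
          · exact h
        have hg := hcube _ hs'
        obtain ⟨hgD, hgx, hginsD⟩ := mem_red.1 hg
        have hkey : f \ insert x A' = (f.erase x) \ A' := by
          ext a; simp only [Finset.mem_sdiff, Finset.mem_erase, Finset.mem_insert]; tauto
        by_cases hxs : x ∈ s
        · have heqq : (f \ insert x A') ∪ s = insert x ((f.erase x \ A') ∪ s.erase x) := by
            rw [hkey]
            ext a
            simp only [Finset.mem_union, Finset.mem_insert, Finset.mem_erase, Finset.mem_sdiff]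
            by_cases hax : a = x
            · subst hax; simp [hxs]
            · tauto
          rw [heqq]
          exact hginsD
        · have heqq : (f \ insert x A') ∪ s = (f.erase x \ A') ∪ s.erase x := by
            rw [hkey, Finset.erase_eq_of_notMem hxs]
          rw [heqq]
          exact hgD

/-! ### two cubes on a d-set contradict VC ≤ d -/

lemma not_both {D : Finset (Finset X)} {k : ℕ} (hvc : VCle D k) {A : Finset X}
    (hA : A.card = k) {x : X} (hx : x ∉ A)
    (h1 : ∀ s ⊆ A, s ∈ D) (h2 : ∀ s ⊆ A, insert x s ∈ D) : False := by
  have hsh : D.Shatters (insert x A) := by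
    intro t ht
    by_cases hxt : x ∈ t
    · have hte : t.erase x ⊆ A := by
        intro a ha
        rcases Finset.mem_insert.1 (ht (Finset.mem_of_mem_erase ha)) with h | h
        · exact absurd h (Finset.ne_of_mem_erase ha)
        · exact h
      refine ⟨insert x (t.erase x), h2 _ hte, ?_⟩
      rw [Finset.insert_erase hxt]
      exact Finset.inter_eq_right.2 ht
    · have hta : t ⊆ A := fun a ha => by
        rcases Finset.mem_insert.1 (ht ha) with h | h
        · exact absurd (h ▸ ha) hxt
        · exact h
      exact ⟨t, h1 t hta, Finset.inter_eq_right.2 ht⟩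
  have hcard := hvc _ hsh
  rw [Finset.card_insert_of_notMem hx, hA] at hcard
  omega

/-! ### Bridge to the set-level statement -/

open Classical in
noncomputable def famOn (C : Set (Set X)) (B : Finset X) : Finset (Finset X) :=
  B.powerset.filter (fun S => (↑S : Set X) ∈ Tr C ↑B)

lemma mem_famOn {C : Set (Set X)} {B S : Finset X} :
    S ∈ famOn C B ↔ S ⊆ B ∧ (↑S : Set X) ∈ Tr C ↑B := by
  simp [famOn]

noncomputable def tfin (B : Finset X) (t : Set X) : Finset X :=
  (B.finite_toSet.inter_of_left t).toFinset

lemma mem_tfin {B : Finset X} {t : Set X} {a : X} : a ∈ tfin B t ↔ a ∈ B ∧ a ∈ t := by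
  simp [tfin]

lemma tfin_coe {B : Finset X} {t : Set X} (ht : t ⊆ ↑B) : (↑(tfin B t) : Set X) = t := by
  ext a
  rw [Finset.mem_coe, mem_tfin]
  exact ⟨fun hh => hh.2, fun hh => ⟨ht hh, hh⟩⟩

lemma famOn_card {C : Set (Set X)} {d : ℕ} (hC : IsMaximum C d) (B : Finset X) :
    (famOn C B).card = Phi d B.card := by
  classical
  have himg : Tr C ↑B = (fun S : Finset X => (↑S : Set X)) '' ↑(famOn C B) := by
    ext u
    constructor
    · rintro ⟨c, hc, rfl⟩
      refine ⟨tfin B c, Finset.mem_coe.2 (mem_famOn.2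
        ⟨fun a ha => (mem_tfin.1 ha).1, ?_⟩), ?_⟩
      · have : (↑(tfin B c) : Set X) = c ∩ ↑B := by
          ext a
          rw [Finset.mem_coe, mem_tfin]
          exact ⟨fun hh => ⟨hh.2, hh.1⟩, fun hh => ⟨hh.2, hh.1⟩⟩
        rw [this]
        exact ⟨c, hc, rfl⟩
      · ext a
        rw [Finset.mem_coe, mem_tfin]
        exact ⟨fun hh => ⟨hh.2, hh.1⟩, fun hh => ⟨hh.2, hh.1⟩⟩
    · rintro ⟨S, hS, rfl⟩
      exact (mem_famOn.1 (Finset.mem_coe.1 hS)).2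
  have h1 := hC.2 B
  rw [himg, Set.ncard_image_of_injective _ (fun a b hab => Finset.coe_injective hab),
    Set.ncard_coe_finset] at h1
  exact h1

lemma famOn_vcle {C : Set (Set X)} {d : ℕ} (hC : VCLe C d) (B : Finset X) :
    VCle (famOn C B) d := by
  intro S hS
  have hSB : S ⊆ B := by
    obtain ⟨u, hu, hSu⟩ := hS (Finset.Subset.refl S)
    exact (Finset.inter_eq_left.1 hSu).trans (mem_famOn.1 hu).1
  apply hC S
  intro T hT
  obtain ⟨u, hu, hSu⟩ := hS (show tfin S T ⊆ S from fun a ha => (mem_tfin.1 ha).1)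
  obtain ⟨hub, c, hc, hcu⟩ := mem_famOn.1 hu
  have hcu : c ∩ ↑B = ↑u := hcu
  refine ⟨c, hc, ?_⟩
  ext a
  simp only [Set.mem_inter_iff, Finset.mem_coe]
  constructor
  · rintro ⟨hac, haS⟩
    have hau : a ∈ u := by
      have : a ∈ c ∩ ↑B := ⟨hac, Finset.mem_coe.2 (hSB haS)⟩
      rw [hcu] at this
      exact Finset.mem_coe.1 this
    have : a ∈ S ∩ u := Finset.mem_inter.2 ⟨haS, hau⟩
    rw [hSu] at this
    exact (mem_tfin.1 this).2
  · intro haT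
    have haS : a ∈ S := by
      have := hT haT
      exact Finset.mem_coe.1 this
    have : a ∈ tfin S T := mem_tfin.2 ⟨haS, haT⟩
    rw [← hSu] at this
    have hau := (Finset.mem_inter.1 this).2
    have : a ∈ c ∩ ↑B := by rw [hcu]; exact Finset.mem_coe.2 hau
    exact ⟨this.1, haS⟩

/-! ### the compression and reconstruction functions -/

def gval (C : Set (Set X)) (A : Finset X) (x : X) : Prop :=
  ∀ s : Finset X, s ⊆ A → ((insert x s : Finset X) : Set X) ∈ Tr C ↑(insert x A)

def rho (C : Set (Set X)) (p : Finset X × Set X) : Set X :=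
  p.2 ∪ {x | x ∉ (p.1 : Set X) ∧ gval C p.1 x}

noncomputable def kappa (C : Set (Set X)) (d : ℕ) (B : Finset X) (t : Set X) : Finset X :=
  if hh : ∃ A, A ⊆ B ∧ A.card = min d B.card ∧
      ∀ s ⊆ A, ((tfin B t \ A) ∪ s) ∈ famOn C B
  then hh.choose else ∅

lemma kappa_spec {C : Set (Set X)} {d : ℕ} {B : Finset X} {t : Set X}
    (hh : ∃ A, A ⊆ B ∧ A.card = min d B.card ∧
      ∀ s ⊆ A, ((tfin B t \ A) ∪ s) ∈ famOn C B) :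
    kappa C d B t ⊆ B ∧ (kappa C d B t).card = min d B.card ∧
      ∀ s ⊆ kappa C d B t, ((tfin B t \ kappa C d B t) ∪ s) ∈ famOn C B := by
  rw [kappa, dif_pos hh]
  exact hh.choose_spec

/-! ### main correctness lemma -/

lemma main {C : Set (Set X)} {d : ℕ} (h : IsMaximum C d) (B : Finset X) (t : Set X)
    (ht : t ∈ Tr C ↑B) :
    kappa C d B t ⊆ B ∧ (kappa C d B t).card ≤ d ∧
      rho C (kappa C d B t, t ∩ ↑(kappa C d B t)) ∩ ↑B = t := by
  classical
  have htB : t ⊆ ↑B := by obtain ⟨c0, hc0, rfl⟩ := ht; exact Set.inter_subset_right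
  have hM : M (famOn C B) B d :=
    ⟨fun f hf => (mem_famOn.1 hf).1, famOn_vcle h.1.1 B, famOn_card h B⟩
  have htFm : tfin B t ∈ famOn C B :=
    mem_famOn.2 ⟨fun a ha => (mem_tfin.1 ha).1, by rw [tfin_coe htB]; exact ht⟩
  have hex : ∃ A, A ⊆ B ∧ A.card = min d B.card ∧
      ∀ s ⊆ A, ((tfin B t \ A) ∪ s) ∈ famOn C B :=
    welzl d hM _ htFm
  obtain ⟨hκB, hκcard, hκcube⟩ := kappa_spec hex
  set A := kappa C d B t with hA
  refine ⟨hκB, by rw [hκcard]; exact min_le_left _ _, ?_⟩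
  ext a
  simp only [rho, Set.mem_inter_iff, Set.mem_union, Set.mem_setOf_eq, Finset.mem_coe]
  constructor
  · rintro ⟨hmem, haB⟩
    rcases hmem with ⟨hat, _⟩ | ⟨haA, hg⟩
    · exact hat
    · by_cases hdB : d ≤ B.card
      · have hAd : A.card = d := by rw [hκcard, min_eq_left hdB]
        by_contra hat
        refine not_both (D := famOn C (insert a A)) (famOn_vcle h.1.1 _) hAd
          (show a ∉ A from fun hc => haA (Finset.mem_coe.2 hc)) ?_ ?_
        · intro s hs
          have hcube := hκcube s hs
          obtain ⟨hsubB, c, hc, hceq⟩ := mem_famOn.1 hcube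
          have hceq : c ∩ ↑B = ↑((tfin B t \ A) ∪ s) := hceq
          refine mem_famOn.2 ⟨hs.trans (Finset.subset_insert _ _), ⟨c, hc, ?_⟩⟩
          ext b
          simp only [Set.mem_inter_iff, Finset.coe_insert, Set.mem_insert_iff, Finset.mem_coe]
          constructor
          · rintro ⟨hbc, hb⟩
            have hbB : b ∈ B := by
              rcases hb with rfl | hb
              · exact haB
              · exact hκB hb
            have hbu : b ∈ ((tfin B t \ A) ∪ s : Finset X) := by
              have : b ∈ c ∩ ↑B := ⟨hbc, Finset.mem_coe.2 hbB⟩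
              rw [hceq] at this
              exact Finset.mem_coe.1 this
            rcases Finset.mem_union.1 hbu with hb1 | hb1
            · exfalso
              have hbA := (Finset.mem_sdiff.1 hb1).2
              have hbt := (mem_tfin.1 (Finset.mem_sdiff.1 hb1).1).2
              rcases hb with rfl | hb
              · exact hat hbt
              · exact hbA hb
            · exact hb1
          · intro hbs
            have hbA : b ∈ A := hs hbs
            have hbB : b ∈ B := hκB hbA
            have hbc : b ∈ c ∩ ↑B := by
              rw [hceq]
              exact Finset.mem_coe.2 (Finset.mem_union_right _ hbs)
            exact ⟨hbc.1, Or.inr hbA⟩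
        · intro s hs
          have hgs := hg s hs
          exact mem_famOn.2 ⟨Finset.insert_subset_insert a hs, hgs⟩
      · push_neg at hdB
        have hAB : A = B := Finset.eq_of_subset_of_card_le hκB
          (by rw [hκcard, min_eq_right (le_of_lt hdB)])
        exact (haA (Finset.mem_coe.2 (show a ∈ A from hAB ▸ haB))).elim
  · intro hat
    have haB : a ∈ B := Finset.mem_coe.1 (htB hat)
    refine ⟨?_, haB⟩
    by_cases haA : a ∈ A
    · exact Or.inl ⟨hat, haA⟩
    · refine Or.inr ⟨fun hc => haA (Finset.mem_coe.1 hc), ?_⟩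
      intro s hs
      have hcube := hκcube s hs
      obtain ⟨hsubB, c, hc, hceq⟩ := mem_famOn.1 hcube
      have hceq : c ∩ ↑B = ↑((tfin B t \ A) ∪ s) := hceq
      refine ⟨c, hc, ?_⟩
      ext b
      simp only [Set.mem_inter_iff, Finset.coe_insert, Set.mem_insert_iff, Finset.mem_coe]
      constructor
      · rintro ⟨hbc, hb⟩
        have hbB : b ∈ B := by
          rcases hb with rfl | hb
          · exact haB
          · exact hκB hb
        have hbu : b ∈ ((tfin B t \ A) ∪ s : Finset X) := by
          have : b ∈ c ∩ ↑B := ⟨hbc, Finset.mem_coe.2 hbB⟩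
          rw [hceq] at this
          exact Finset.mem_coe.1 this
        rcases Finset.mem_union.1 hbu with hb1 | hb1
        · have hbA := (Finset.mem_sdiff.1 hb1).2
          rcases hb with rfl | hb
          · exact Or.inl rfl
          · exact absurd hb hbA
        · exact Or.inr hb1
      · intro hb
        have hbu : b ∈ ((tfin B t \ A) ∪ s : Finset X) := by
          rcases hb with rfl | hbs
          · exact Finset.mem_union_left _ (Finset.mem_sdiff.2
              ⟨mem_tfin.2 ⟨haB, hat⟩, haA⟩)
          · exact Finset.mem_union_right _ hbs
        have hbB : b ∈ B := hsubB hbu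
        have hbc : b ∈ c ∩ ↑B := by
          rw [hceq]
          exact Finset.mem_coe.2 hbu
        refine ⟨hbc.1, ?_⟩
        rcases hb with rfl | hbs
        · exact Or.inl rfl
        · exact Or.inr (hs hbs)

end MCS

/-- Every `d`-maximum class admits a `d`-dimensional labeled compression scheme. -/
theorem maximum_compression_scheme (C : Set (Set X)) (d : ℕ) (h : IsMaximum C d) :
    ∃ κ : Finset X → Set X → Finset X, ∃ R : Set (Finset X × Set X → Set X),
      R.Finite ∧
      ∀ B : Finset X, ∀ t ∈ Tr C ↑B,
        κ B t ⊆ B ∧ (κ B t).card ≤ d ∧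
        ∃ ρ ∈ R, ρ (κ B t, t ∩ ↑(κ B t)) ∩ ↑B = t := by
  haveI := Classical.decEq X
  refine ⟨MCS.kappa C d, {MCS.rho C}, Set.finite_singleton _, ?_⟩
  intro B t ht
  obtain ⟨h1, h2, h3⟩ := MCS.main h B t ht
  exact ⟨h1, h2, MCS.rho C, rfl, h3⟩
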